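/- Let (ρ(i))_{i∈ℕ, i≥1} be independent random variables, each uniformly distributed on [0,1]. For every integer k ≥ 1 and every t ∈ (0,1], with probability 1 the set {i : ρ(i) ≥ t and #{j < i : ρ(j) < ρ(i)} = k−1} is finite; that is, with probability 1 only finitely many k-potentials arrive in [t,1]. -/

import Mathlib

open MeasureTheory ProbabilityTheory
open scoped ENNReal NNReal

/-- Infinite model of the secretary problem: items are indexed by rank
(`ρ i` is the arrival time of the item of rank `i`, lower rank meaning better merit),
with i.i.d. uniform `[0,1]` arrival times.  The item of rank `i` is a `k`-potential if
exactly `k-1` indices `j < i` satisfy `ρ j < ρ i`.  For every `k ≥ 1` and `t ∈ (0,1]`,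
with probability 1 only finitely many `k`-potentials arrive in `[t,1]`. -/
theorem finitely_many_potentials_after_t
    {Ω : Type*} [MeasurableSpace Ω] (μ : Measure Ω) [IsProbabilityMeasure μ]
    (ρ : ℕ → Ω → ℝ) (hmeas : ∀ i, Measurable (ρ i))
    (hindep : iIndepFun ρ μ)
    (hunif : ∀ i, Measure.map (ρ i) μ = volume.restrict (Set.Icc (0 : ℝ) 1))
    (k : ℕ) (hk : 1 ≤ k) (t : ℝ) (ht : t ∈ Set.Ioc (0 : ℝ) 1) :
    μ {ω | {i : ℕ | t ≤ ρ i ω ∧ {j : ℕ | j < i ∧ ρ j ω < ρ i ω}.ncard = k - 1}.Finite} = 1 := by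
  obtain ⟨ht0, ht1⟩ := ht
  set m : ℕ := k - 1 with hm
  -- covering events
  set E : ℕ → Set Ω := fun i =>
    ⋃ s ∈ (Finset.range i).powersetCard (i - m), ⋂ j ∈ s, ρ j ⁻¹' Set.Ici t with hE
  -- inclusion of the k-potential event in E i
  have hsub : ∀ i ω, t ≤ ρ i ω → {j : ℕ | j < i ∧ ρ j ω < ρ i ω}.ncard = m → ω ∈ E i := by
    intro i ω hti hcard
    have hset : {j : ℕ | j < i ∧ ρ j ω < ρ i ω}
        = ↑((Finset.range i).filter fun j => ρ j ω < ρ i ω) := by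
      ext j; simp [Finset.mem_filter]
    have hcard' : ((Finset.range i).filter fun j => ρ j ω < ρ i ω).card = m := by
      rw [hset, Set.ncard_coe_finset] at hcard; exact hcard
    have hBsub : ((Finset.range i).filter fun j => ρ j ω < t)
        ⊆ ((Finset.range i).filter fun j => ρ j ω < ρ i ω) := by
      intro j hj
      simp only [Finset.mem_filter, Finset.mem_range] at hj ⊢
      exact ⟨hj.1, lt_of_lt_of_le hj.2 hti⟩
    have hBcard : ((Finset.range i).filter fun j => ρ j ω < t).card ≤ m :=
      hcard' ▸ Finset.card_le_card hBsub
    have hsplit : ((Finset.range i).filter fun j => ρ j ω < t).card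
        + ((Finset.range i).filter fun j => ¬ ρ j ω < t).card = i := by
      rw [Finset.card_filter_add_card_filter_not, Finset.card_range]
    have hGcard : i - m ≤ ((Finset.range i).filter fun j => ¬ ρ j ω < t).card := by omega
    obtain ⟨s, hs_sub, hs_card⟩ :=
      Finset.exists_subset_card_eq hGcard
    refine Set.mem_iUnion₂.2 ⟨s, ?_, ?_⟩
    · exact Finset.mem_powersetCard.2
        ⟨hs_sub.trans (Finset.filter_subset _ _), hs_card⟩
    · refine Set.mem_iInter₂.2 fun j hj => ?_
      have := hs_sub hj
      simp only [Finset.mem_filter, not_lt] at this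
      exact this.2
  -- probability of a single preimage
  have hone : ∀ j : ℕ, μ (ρ j ⁻¹' Set.Ici t) = ENNReal.ofReal (1 - t) := by
    intro j
    rw [← Measure.map_apply (hmeas j) measurableSet_Ici, hunif j,
      Measure.restrict_apply measurableSet_Ici]
    have : Set.Ici t ∩ Set.Icc (0 : ℝ) 1 = Set.Icc t 1 := by
      ext x
      simp only [Set.mem_inter_iff, Set.mem_Ici, Set.mem_Icc]
      constructor
      · rintro ⟨h1, _, h3⟩; exact ⟨h1, h3⟩
      · rintro ⟨h1, h2⟩; exact ⟨h1, le_trans (le_of_lt ht0) h1, h2⟩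
    rw [this, Real.volume_Icc]
  -- bound on μ (E i)
  have hEbound : ∀ i, μ (E i) ≤ (i.choose (i - m) : ℝ≥0∞) * ENNReal.ofReal (1 - t) ^ (i - m) := by
    intro i
    calc μ (E i) ≤ ∑ s ∈ (Finset.range i).powersetCard (i - m), μ (⋂ j ∈ s, ρ j ⁻¹' Set.Ici t) :=
          measure_biUnion_finset_le _ _
      _ = ∑ s ∈ (Finset.range i).powersetCard (i - m), ENNReal.ofReal (1 - t) ^ (i - m) := by
          refine Finset.sum_congr rfl fun s hs => ?_
          have : μ (⋂ j ∈ s, ρ j ⁻¹' Set.Ici t) = ∏ j ∈ s, μ (ρ j ⁻¹' Set.Ici t) :=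
            hindep.meas_biInter fun j _ => ⟨Set.Ici t, measurableSet_Ici, rfl⟩
          rw [this]
          have hcard := (Finset.mem_powersetCard.1 hs).2
          simp only [hone]
          rw [Finset.prod_const, hcard]
      _ = (i.choose (i - m) : ℝ≥0∞) * ENNReal.ofReal (1 - t) ^ (i - m) := by
          rw [Finset.sum_const, Finset.card_powersetCard, Finset.card_range, nsmul_eq_mul]
  -- summability of the bound
  have hsum : (∑' i, μ (E i)) ≠ ⊤ := by
    have hq0 : (0 : ℝ) ≤ 1 - t := by linarith
    have hq1 : ‖(1 - t : ℝ)‖ < 1 := by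
      rw [Real.norm_eq_abs, abs_of_nonneg hq0]; linarith
    set c : ℕ → ℝ≥0 := fun i => (i.choose (i - m) : ℝ≥0) * (1 - t).toNNReal ^ (i - m) with hc
    have hle : (∑' i, μ (E i)) ≤ ∑' i, (c i : ℝ≥0∞) := by
      refine ENNReal.tsum_le_tsum fun i => (hEbound i).trans (le_of_eq ?_)
      simp [hc, ENNReal.ofReal, ENNReal.coe_mul, ENNReal.coe_pow]
    refine ne_top_of_le_ne_top ?_ hle
    rw [ENNReal.tsum_coe_ne_top_iff_summable]
    rw [← NNReal.summable_coe]
    have hshift : Summable fun n : ℕ => ((c (n + m) : ℝ)) := by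
      have hbase : Summable fun n : ℕ => (((n + m).choose m : ℝ)) * (1 - t) ^ n :=
        summable_choose_mul_geometric_of_norm_lt_one m hq1
      refine hbase.congr fun n => ?_
      have h1 : n + m - m = n := by omega
      have h2 : (n + m).choose n = (n + m).choose m := by
        rw [← Nat.choose_symm (Nat.le_add_left m n)]
        congr 1; omega
      simp only [hc, NNReal.coe_mul, NNReal.coe_pow, NNReal.coe_natCast, h1,
        Real.coe_toNNReal _ hq0, h2]
    exact (summable_nat_add_iff m).1 hshift
  -- Borel–Cantelli
  have hbc : μ {ω | ∃ᶠ i in Filter.atTop, ω ∈ E i} = 0 := by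
    refine measure_setOf_frequently_eq_zero ?_
    simpa using hsum
  -- conclusion
  set S := {ω | {i : ℕ | t ≤ ρ i ω ∧ {j : ℕ | j < i ∧ ρ j ω < ρ i ω}.ncard = k - 1}.Finite}
    with hS
  have hcompl : Sᶜ ⊆ {ω | ∃ᶠ i in Filter.atTop, ω ∈ E i} := by
    intro ω hω
    have hω' : ¬ {i : ℕ | t ≤ ρ i ω ∧ {j : ℕ | j < i ∧ ρ j ω < ρ i ω}.ncard = k - 1}.Finite := hω
    have hinf : {i : ℕ | t ≤ ρ i ω ∧ {j : ℕ | j < i ∧ ρ j ω < ρ i ω}.ncard = k - 1}.Infinite :=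
      hω'
    have hfreq : ∃ᶠ i in Filter.atTop,
        t ≤ ρ i ω ∧ {j : ℕ | j < i ∧ ρ j ω < ρ i ω}.ncard = k - 1 :=
      Nat.frequently_atTop_iff_infinite.2 hinf
    exact hfreq.mono fun i hi => hsub i ω hi.1 hi.2
  have hcompl0 : μ Sᶜ = 0 :=
    le_antisymm ((measure_mono hcompl).trans hbc.le) (zero_le)
  have h1 : (1 : ℝ≥0∞) ≤ μ S := by
    have := measure_union_le (μ := μ) S Sᶜ
    rw [Set.union_compl_self, measure_univ, hcompl0, add_zero] at this
    exact this
  exact le_antisymm prob_le_one h1
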